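/- There is a bijection between dispersed Dyck paths of length n and lattice paths from (0,0) to (n, -(n mod 2)) in ℤ×ℤ using only steps (+1,+1) and (+1,-1). -/

import Mathlib

inductive DStep | up | down | right
deriving DecidableEq, Repr

instance : Fintype DStep := ⟨{.up, .down, .right}, fun x => by cases x <;> simp⟩

/-- Run a dispersed Dyck path from height `h`; `none` if an illegal step occurs,
otherwise the final height. Down steps require positive height; right steps require height 0. -/
def DStep.run : ℕ → List DStep → Option ℕ
  | h, [] => some h
  | h, .up :: l => DStep.run (h + 1) l
  | h + 1, .down :: l => DStep.run h l
  | 0, .down :: _ => none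
  | 0, .right :: l => DStep.run 0 l
  | _ + 1, .right :: _ => none

/-- A dispersed Dyck path: starts and ends at height 0, all steps legal. -/
def IsDDP (l : List DStep) : Prop := DStep.run 0 l = some 0

instance : DecidablePred IsDDP := fun l => by unfold IsDDP; infer_instance

/-- The finset of all dispersed Dyck paths of length `n`. -/
def DDPs (n : ℕ) : Finset (List.Vector DStep n) :=
  Finset.univ.filter (fun v => IsDDP v.toList)

/-- Number of dispersed Dyck paths of length `n`. -/
def dD (n : ℕ) : ℕ := (DDPs n).card

/-- Total number of up steps over all DDPs of length `n`. -/
def U (n : ℕ) : ℕ := ∑ v ∈ DDPs n, v.toList.count DStep.up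

/-- Total number of down steps over all DDPs of length `n`. -/
def D (n : ℕ) : ℕ := ∑ v ∈ DDPs n, v.toList.count DStep.down

/-- Total number of right steps over all DDPs of length `n`. -/
def R (n : ℕ) : ℕ := ∑ v ∈ DDPs n, v.toList.count DStep.right

/-- `i` is the position of a 1-ascent in `l`: an up step with no adjacent up step. -/
def IsOneAscentAt (l : List DStep) (i : ℕ) : Prop :=
  l[i]? = some .up ∧ l[i + 1]? ≠ some .up ∧ (i = 0 ∨ l[i - 1]? ≠ some .up)

instance (l : List DStep) : DecidablePred (IsOneAscentAt l) := fun i => by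
  unfold IsOneAscentAt; infer_instance

/-- Number of 1-ascents in `l`. -/
def oneAsc (l : List DStep) : ℕ :=
  ((Finset.range l.length).filter (IsOneAscentAt l)).card

/-- Total number of 1-ascents over all DDPs of length `n`. -/
def A (n : ℕ) : ℕ := ∑ v ∈ DDPs n, oneAsc v.toList

/-- Signed final height of a plain path (ignoring any right steps). -/
def psum : List DStep → ℤ
  | [] => 0
  | .up :: l => 1 + psum l
  | .down :: l => -1 + psum l
  | .right :: l => psum l



def Lset : ℕ → Finset (List DStep)
  | 0 => {[]}
  | n + 1 => ((Lset n).image (DStep.up :: ·)) ∪ ((Lset n).image (DStep.down :: ·)) ∪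
      ((Lset n).image (DStep.right :: ·))

lemma Lset_succ (n : ℕ) : Lset (n+1) =
    ((Lset n).image (DStep.up :: ·)) ∪ ((Lset n).image (DStep.down :: ·)) ∪
      ((Lset n).image (DStep.right :: ·)) := rfl

lemma mem_Lset {n : ℕ} {l : List DStep} : l ∈ Lset n ↔ l.length = n := by
  induction n generalizing l with
  | zero => simp [Lset, List.length_eq_zero_iff]
  | succ n ih =>
    simp only [Lset_succ, Finset.mem_union, Finset.mem_image]
    constructor
    · rintro ((⟨a, ha, rfl⟩ | ⟨a, ha, rfl⟩) | ⟨a, ha, rfl⟩) <;> simp [ih.mp ha]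
    · intro h
      match l, h with
      | s :: t, h =>
        have ht : t ∈ Lset n := ih.mpr (by simpa using h)
        cases s
        · exact Or.inl (Or.inl ⟨t, ht, rfl⟩)
        · exact Or.inl (Or.inr ⟨t, ht, rfl⟩)
        · exact Or.inr ⟨t, ht, rfl⟩

lemma card_filter_Lset_succ (n : ℕ) (P : List DStep → Prop) [DecidablePred P] :
    ((Lset (n+1)).filter P).card =
      ((Lset n).filter (fun l => P (.up :: l))).card +
      ((Lset n).filter (fun l => P (.down :: l))).card +
      ((Lset n).filter (fun l => P (.right :: l))).card := by
  have hinj : ∀ s : DStep, Function.Injective (s :: · : List DStep → List DStep) :=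
    fun s a b h => by injection h
  have hdisj : ∀ s t : DStep, s ≠ t →
      Disjoint (((Lset n).filter (fun l => P (s :: l))).image (s :: ·))
        (((Lset n).filter (fun l => P (t :: l))).image (t :: ·)) := by
    intro s t hst
    simp only [Finset.disjoint_left, Finset.mem_image]
    rintro a ⟨x, _, rfl⟩ ⟨y, _, h⟩
    injection h with h1 _
    exact hst h1.symm
  rw [Lset_succ, Finset.filter_union, Finset.filter_union,
    Finset.filter_image, Finset.filter_image, Finset.filter_image,
    Finset.card_union_of_disjoint, Finset.card_union_of_disjoint,
    Finset.card_image_of_injective _ (hinj _), Finset.card_image_of_injective _ (hinj _),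
    Finset.card_image_of_injective _ (hinj _)]
  · exact hdisj _ _ (by simp)
  · rw [Finset.disjoint_union_left]
    exact ⟨hdisj _ _ (by simp), hdisj _ _ (by simp)⟩

def dC (n h : ℕ) : ℕ := ((Lset n).filter (fun l => DStep.run h l = some 0)).card
def pC (n : ℕ) (k : ℤ) : ℕ := ((Lset n).filter (fun l => DStep.right ∉ l ∧ psum l = k)).card

lemma dC_zero (h : ℕ) : dC 0 h = if h = 0 then 1 else 0 := by
  show (Finset.filter _ {[]}).card = _
  rcases h with _ | h <;> simp [DStep.run, Finset.filter_singleton]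

lemma dC_succ_zero (n : ℕ) : dC (n+1) 0 = dC n 1 + dC n 0 := by
  unfold dC
  rw [card_filter_Lset_succ]
  simp [DStep.run]
  congr

lemma dC_succ_succ (n h : ℕ) : dC (n+1) (h+1) = dC n (h+2) + dC n h := by
  unfold dC
  rw [card_filter_Lset_succ]
  simp [DStep.run]
  congr

lemma pC_zero (k : ℤ) : pC 0 k = if k = 0 then 1 else 0 := by
  show (Finset.filter _ {[]}).card = _
  rw [Finset.filter_singleton]
  by_cases hk : k = 0 <;> simp [psum, hk, eq_comm]

lemma pC_succ (n : ℕ) (k : ℤ) : pC (n+1) k = pC n (k-1) + pC n (k+1) := by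
  unfold pC
  rw [card_filter_Lset_succ]
  have h1 : ∀ l ∈ Lset n, ((DStep.right ∉ (DStep.up :: l) ∧ psum (.up :: l) = k)
      ↔ (DStep.right ∉ l ∧ psum l = k - 1)) := by
    intro l _; simp [psum]; intro _; omega
  have h2 : ∀ l ∈ Lset n, ((DStep.right ∉ (DStep.down :: l) ∧ psum (.down :: l) = k)
      ↔ (DStep.right ∉ l ∧ psum l = k + 1)) := by
    intro l _; simp [psum]; intro _; omega
  have h3 : (Lset n).filter (fun l => DStep.right ∉ (DStep.right :: l) ∧ psum (.right :: l) = k)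
      = ∅ := by
    apply Finset.filter_false_of_mem
    intro l _; simp
  rw [Finset.filter_congr h1, Finset.filter_congr h2, h3]
  simp

lemma pC_neg (n : ℕ) (k : ℤ) : pC n (-k) = pC n k := by
  induction n generalizing k with
  | zero => rw [pC_zero, pC_zero]; simp [neg_eq_zero]
  | succ n ih =>
    rw [pC_succ, pC_succ, show -k - 1 = -(k+1) by ring, show -k + 1 = -(k-1) by ring, ih, ih,
      Nat.add_comm]

lemma pC_congr_neg (n : ℕ) {a b : ℤ} (h : a = -b) : pC n a = pC n b := by
  rw [h, pC_neg]

lemma dC_eq_pC (n h : ℕ) : dC n h = pC n (-(h:ℤ) - ((n + h) % 2 : ℕ)) := by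
  induction n generalizing h with
  | zero =>
    rw [dC_zero, pC_zero]
    split_ifs <;> omega
  | succ n ih =>
    match h with
    | 0 =>
      rw [dC_succ_zero, ih, ih, pC_succ]
      rcases Nat.even_or_odd n with he | ho
      · have he' := Nat.even_iff.mp he
        congr 1 <;> exact congrArg (pC n) (by omega)
      · have ho' := Nat.odd_iff.mp ho
        congr 1
        · exact congrArg (pC n) (by omega)
        · exact pC_congr_neg n (by omega)
    | h + 1 =>
      rw [dC_succ_succ, ih, ih, pC_succ]
      congr 1 <;> exact congrArg (pC n) (by omega)

/-- There is a bijection between dispersed Dyck paths of length `n` and plain paths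
(only up and down steps) from `(0,0)` to `(n, -(n % 2))`. -/
theorem ddp_equiv_plainPaths (n : ℕ) :
    Nonempty ({l : List DStep // l.length = n ∧ IsDDP l} ≃
      {l : List DStep // l.length = n ∧ DStep.right ∉ l ∧ psum l = -((n : ℤ) % 2)}) := by
  have e1 : {l : List DStep // l.length = n ∧ IsDDP l} ≃
      {l : List DStep // l ∈ (Lset n).filter (fun l => DStep.run 0 l = some 0)} :=
    Equiv.subtypeEquivRight (fun l => by
      rw [Finset.mem_filter, mem_Lset]; exact Iff.rfl)
  have e2 : {l : List DStep // l.length = n ∧ DStep.right ∉ l ∧ psum l = -((n : ℤ) % 2)} ≃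
      {l : List DStep //
        l ∈ (Lset n).filter (fun l => DStep.right ∉ l ∧ psum l = -((n : ℤ) % 2))} :=
    Equiv.subtypeEquivRight (fun l => by
      rw [Finset.mem_filter, mem_Lset])
  have h0 : dC n 0 = pC n (-((n : ℤ) % 2)) := by
    rw [dC_eq_pC]; exact congrArg (pC n) (by omega)
  have hc : Fintype.card {l : List DStep // l ∈ (Lset n).filter
        (fun l => DStep.run 0 l = some 0)} =
      Fintype.card {l : List DStep // l ∈ (Lset n).filter
        (fun l => DStep.right ∉ l ∧ psum l = -((n : ℤ) % 2))} := by
    rw [Fintype.card_coe, Fintype.card_coe]; exact h0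
  obtain ⟨e⟩ := Fintype.card_eq.mp hc
  exact ⟨e1.trans (e.trans e2.symm)⟩
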